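/- Let F¹, F², F³ be filtrations on R sharing a common adapted basis. Then the operation ⊕ on these filtrations is associative: (F¹ ⊕ F²) ⊕ F³ = F¹ ⊕ (F² ⊕ F³). -/

import Mathlib

variable {k R : Type*} [Field k] [CommRing R] [Algebra k R]

/-- The sum `F ⊕ G` of two filtrations:
`(F ⊕ G)_r = Σ_{r₁ + r₂ = r} F_{r₁} ∩ G_{r₂}`. -/
noncomputable def filtSum (F G : ℚ → Submodule k R) : ℚ → Submodule k R :=
  fun r => ⨆ p : {p : ℚ × ℚ // p.1 + p.2 = r}, (F p.1.1 ⊓ G p.1.2)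

/-- let `F¹, F², F³` be (decreasing) filtrations on `R` sharing a
common adapted basis `B`.  Then the operation `⊕` on these filtrations is
associative: `(F¹ ⊕ F²) ⊕ F³ = F¹ ⊕ (F² ⊕ F³)`. -/
theorem filtSum_assoc
    (F₁ F₂ F₃ : ℚ → Submodule k R)
    (h₁ : Antitone F₁) (h₂ : Antitone F₂) (h₃ : Antitone F₃)
    (B : Set R)
    (hind : LinearIndependent k ((↑) : B → R))
    (hspan : Submodule.span k B = ⊤)
    (hadapt₁ : ∀ r, Submodule.span k (B ∩ (F₁ r : Set R)) = F₁ r)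
    (hadapt₂ : ∀ r, Submodule.span k (B ∩ (F₂ r : Set R)) = F₂ r)
    (hadapt₃ : ∀ r, Submodule.span k (B ∩ (F₃ r : Set R)) = F₃ r) :
    ∀ r : ℚ, filtSum (filtSum F₁ F₂) F₃ r = filtSum F₁ (filtSum F₂ F₃) r := by
  classical
  have hspan' : ⊤ ≤ Submodule.span k (Set.range ((↑) : B → R)) := by
    rw [Subtype.range_coe, hspan]
  let b : Module.Basis B k R := Module.Basis.mk hind hspan'
  have hb : ∀ x : B, b x = (x : R) := fun x => Module.Basis.mk_apply hind hspan' x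
  have hbimg : ∀ s : Set B, b '' s = ((↑) : B → R) '' s :=
    fun s => Set.image_congr fun x _ => hb x
  -- intersection of spans of subsets of the basis
  have hinf : ∀ s t : Set B,
      Submodule.span k (b '' s) ⊓ Submodule.span k (b '' t)
        = Submodule.span k (b '' (s ∩ t)) := by
    intro s t
    ext x
    simp only [Submodule.mem_inf, Module.Basis.mem_span_image, Set.subset_inter_iff]
  -- each filtration is the span of a subset of the basis
  have key : ∀ (F : ℚ → Submodule k R),
      (∀ r, Submodule.span k (B ∩ (F r : Set R)) = F r) →
      ∀ r, F r = Submodule.span k (b '' (((↑) : B → R) ⁻¹' (F r : Set R))) := by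
    intro F hF r
    rw [hbimg, Set.image_preimage_eq_inter_range, Subtype.range_coe,
      Set.inter_comm, hF]
  -- the sum of two "basis-adapted" filtrations
  have hsum : ∀ (F G : ℚ → Submodule k R) (sF sG : ℚ → Set B),
      (∀ r, F r = Submodule.span k (b '' sF r)) →
      (∀ r, G r = Submodule.span k (b '' sG r)) →
      ∀ r, filtSum F G r
        = Submodule.span k (b ''
            ⋃ p : {p : ℚ × ℚ // p.1 + p.2 = r}, (sF p.1.1 ∩ sG p.1.2)) := by
    intro F G sF sG hF hG r
    unfold filtSum
    rw [Set.image_iUnion, Submodule.span_iUnion]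
    refine iSup_congr fun p => ?_
    rw [hF, hG, hinf]
  intro r
  set s₁ : ℚ → Set B := fun a => ((↑) : B → R) ⁻¹' (F₁ a : Set R)
  set s₂ : ℚ → Set B := fun a => ((↑) : B → R) ⁻¹' (F₂ a : Set R)
  set s₃ : ℚ → Set B := fun a => ((↑) : B → R) ⁻¹' (F₃ a : Set R)
  have hF₁ := key F₁ hadapt₁
  have hF₂ := key F₂ hadapt₂
  have hF₃ := key F₃ hadapt₃
  have h12 := hsum F₁ F₂ s₁ s₂ hF₁ hF₂
  have h23 := hsum F₂ F₃ s₂ s₃ hF₂ hF₃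
  rw [hsum (filtSum F₁ F₂) F₃
      (fun a => ⋃ q : {q : ℚ × ℚ // q.1 + q.2 = a}, (s₁ q.1.1 ∩ s₂ q.1.2)) s₃
      h12 hF₃ r,
    hsum F₁ (filtSum F₂ F₃) s₁
      (fun a => ⋃ q : {q : ℚ × ℚ // q.1 + q.2 = a}, (s₂ q.1.1 ∩ s₃ q.1.2))
      hF₁ h23 r]
  congr 1
  apply congrArg
  ext x
  simp only [Set.mem_iUnion, Set.mem_inter_iff]
  constructor
  · rintro ⟨⟨⟨p₁, c⟩, hp⟩, ⟨⟨⟨a, bb⟩, hq⟩, hx₁, hx₂⟩, hx₃⟩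
    exact ⟨⟨⟨a, bb + c⟩, by dsimp; linarith⟩, hx₁,
      ⟨⟨⟨bb, c⟩, rfl⟩, hx₂, hx₃⟩⟩
  · rintro ⟨⟨⟨a, p₂⟩, hp⟩, hx₁, ⟨⟨⟨bb, c⟩, hq⟩, hx₂, hx₃⟩⟩
    exact ⟨⟨⟨a + bb, c⟩, by dsimp; linarith⟩,
      ⟨⟨⟨a, bb⟩, rfl⟩, hx₁, hx₂⟩, hx₃⟩
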